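/- Assume λ + μ² ≠ 0. Let P, Q, R, S be a pqrs-quad and define the C-difference functions E_P(w) = P(−w) + (λ+μ²)⁻¹·e^{2(1−ℓ)w}·(μ·e^{2w}·R(w) + S(w)), E_Q(w) = Q(−w) + (λ+μ²)⁻¹·e^{−2ℓw}·(λ·e^{2w}·R(w) − μ·S(w)), E_R(w) = R(−w) + e^{2(1−ℓ)w}·(μ·e^{2w}·P(w) + Q(w)), E_S(w) = S(−w) + e^{−2ℓw}·(λ·e^{2w}·P(w) − μ·Q(w)). Then for every w ∈ ℂ: e^w·E_P′(w) = −e^w·(ℓ−1+μe^w)·E_P(w) + e^{2w}·E_Q(w) − E_R(w); e^{2w}·E_Q′(w) = ((ℓ+1)μ − λe^w)·E_P(w) − μe^w·E_Q(w) − e^w·E_S(w); e^w·E_R′(w) = (λ+μ²)·e^{2w}·E_P(w) + (μ + 2(1−ℓ)e^w)·E_R(w) + e^{2w}·E_S(w); e^{2w}·E_S′(w) = (λ+μ²)·e^{3w}·E_Q(w) + ((ℓ+1)μ − λe^w)·E_R(w) + e^{2w}·(1−ℓ+μe^w)·E_S(w). -/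

import Mathlib

lemma hd_comp_neg (P : ℂ → ℂ) (hP : Differentiable ℂ P) (w : ℂ) :
    HasDerivAt (fun x => P (-x)) (-deriv P (-w)) w := by
  have h := ((hP (-w)).hasDerivAt.comp w (hasDerivAt_neg w))
  rw [mul_neg_one] at h
  exact h

lemma hd_exp_lin (a w : ℂ) :
    HasDerivAt (fun x => Complex.exp (a * x)) (a * Complex.exp (a * w)) w := by
  have h := (Complex.hasDerivAt_exp (a * w)).comp w ((hasDerivAt_id w).const_mul a)
  rw [mul_one, mul_comm (Complex.exp (a * w))] at h
  exact h

noncomputable def EP (ell lam mu : ℂ) (P Q R S : ℂ → ℂ) : ℂ → ℂ := fun w =>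
  P (-w) + (lam + mu ^ 2)⁻¹ * Complex.exp (2 * (1 - ell) * w) *
    (mu * Complex.exp (2 * w) * R w + S w)

noncomputable def EQ (ell lam mu : ℂ) (P Q R S : ℂ → ℂ) : ℂ → ℂ := fun w =>
  Q (-w) + (lam + mu ^ 2)⁻¹ * Complex.exp (-(2 * ell) * w) *
    (lam * Complex.exp (2 * w) * R w - mu * S w)

noncomputable def ER (ell lam mu : ℂ) (P Q R S : ℂ → ℂ) : ℂ → ℂ := fun w =>
  R (-w) + Complex.exp (2 * (1 - ell) * w) * (mu * Complex.exp (2 * w) * P w + Q w)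

noncomputable def ES (ell lam mu : ℂ) (P Q R S : ℂ → ℂ) : ℂ → ℂ := fun w =>
  S (-w) + Complex.exp (-(2 * ell) * w) * (lam * Complex.exp (2 * w) * P w - mu * Q w)

set_option maxHeartbeats 2000000 in
theorem statement_16 (ell lam mu : ℂ) (hne : lam + mu ^ 2 ≠ 0) (P Q R S : ℂ → ℂ)
    (hP : Differentiable ℂ P) (hQ : Differentiable ℂ Q)
    (hR : Differentiable ℂ R) (hS : Differentiable ℂ S)
    (hsys1 : ∀ w : ℂ, Complex.exp w * deriv P w =
      (mu + (ell - 1) * Complex.exp w) * P w - Q w + Complex.exp (2 * w) * R w)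
    (hsys2 : ∀ w : ℂ, deriv Q w =
      Complex.exp w * ((lam - (ell + 1) * mu * Complex.exp w) * P w + mu * Q w + S w))
    (hsys3 : ∀ w : ℂ, Complex.exp w * deriv R w =
      -(lam + mu ^ 2) * P w + Complex.exp w * (2 * (ell - 1) - mu * Complex.exp w) * R w - S w)
    (hsys4 : ∀ w : ℂ, Complex.exp w * deriv S w =
      -(lam + mu ^ 2) * Q w + Complex.exp (2 * w) * (lam - (ell + 1) * mu * Complex.exp w) * R w
        + ((ell - 1) * Complex.exp w - mu) * S w) :
    ∀ w : ℂ,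
      Complex.exp w * deriv (EP ell lam mu P Q R S) w =
        -(Complex.exp w) * (ell - 1 + mu * Complex.exp w) * EP ell lam mu P Q R S w +
          Complex.exp (2 * w) * EQ ell lam mu P Q R S w - ER ell lam mu P Q R S w ∧
      Complex.exp (2 * w) * deriv (EQ ell lam mu P Q R S) w =
        ((ell + 1) * mu - lam * Complex.exp w) * EP ell lam mu P Q R S w -
          mu * Complex.exp w * EQ ell lam mu P Q R S w -
          Complex.exp w * ES ell lam mu P Q R S w ∧
      Complex.exp w * deriv (ER ell lam mu P Q R S) w =
        (lam + mu ^ 2) * Complex.exp (2 * w) * EP ell lam mu P Q R S w +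
          (mu + 2 * (1 - ell) * Complex.exp w) * ER ell lam mu P Q R S w +
          Complex.exp (2 * w) * ES ell lam mu P Q R S w ∧
      Complex.exp (2 * w) * deriv (ES ell lam mu P Q R S) w =
        (lam + mu ^ 2) * Complex.exp (3 * w) * EQ ell lam mu P Q R S w +
          ((ell + 1) * mu - lam * Complex.exp w) * ER ell lam mu P Q R S w +
          Complex.exp (2 * w) * (1 - ell + mu * Complex.exp w) * ES ell lam mu P Q R S w := by
  intro w
  have hdPf : ∀ v : ℂ, deriv P v = (Complex.exp v)⁻¹ *
      ((mu + (ell - 1) * Complex.exp v) * P v - Q v + Complex.exp (2 * v) * R v) := fun v => by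
    rw [← hsys1 v, inv_mul_cancel_left₀ (Complex.exp_ne_zero v)]
  have hdRf : ∀ v : ℂ, deriv R v = (Complex.exp v)⁻¹ *
      (-(lam + mu ^ 2) * P v + Complex.exp v * (2 * (ell - 1) - mu * Complex.exp v) * R v
        - S v) := fun v => by
    rw [← hsys3 v, inv_mul_cancel_left₀ (Complex.exp_ne_zero v)]
  have hdSf : ∀ v : ℂ, deriv S v = (Complex.exp v)⁻¹ *
      (-(lam + mu ^ 2) * Q v + Complex.exp (2 * v) * (lam - (ell + 1) * mu * Complex.exp v) * R v
        + ((ell - 1) * Complex.exp v - mu) * S v) := fun v => by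
    rw [← hsys4 v, inv_mul_cancel_left₀ (Complex.exp_ne_zero v)]
  have e1 : Complex.exp (2 * w) = Complex.exp w ^ 2 := by
    rw [show (2 : ℂ) * w = w + w by ring, Complex.exp_add]; ring
  have e2 : Complex.exp (3 * w) = Complex.exp w ^ 3 := by
    rw [show (3 : ℂ) * w = w + (w + w) by ring, Complex.exp_add, Complex.exp_add]; ring
  have e3 : Complex.exp (-w) = (Complex.exp w)⁻¹ := Complex.exp_neg w
  have e4 : Complex.exp (2 * -w) = (Complex.exp w ^ 2)⁻¹ := by
    rw [show (2 : ℂ) * -w = -(w + w) by ring, Complex.exp_neg, Complex.exp_add]; ring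
  have e5 : Complex.exp (2 * (1 - ell) * w)
      = Complex.exp (-(2 * ell) * w) * Complex.exp w ^ 2 := by
    rw [show 2 * (1 - ell) * w = -(2 * ell) * w + (w + w) by ring, Complex.exp_add,
      Complex.exp_add]; ring
  have hdEP : deriv (EP ell lam mu P Q R S) w = _ :=
    ((hd_comp_neg P hP w).add
      (((hd_exp_lin (2 * (1 - ell)) w).const_mul ((lam + mu ^ 2)⁻¹)).mul
        ((((hd_exp_lin 2 w).const_mul mu).mul (hR w).hasDerivAt).add
          (hS w).hasDerivAt))).deriv
  have hdEQ : deriv (EQ ell lam mu P Q R S) w = _ :=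
    ((hd_comp_neg Q hQ w).add
      (((hd_exp_lin (-(2 * ell)) w).const_mul ((lam + mu ^ 2)⁻¹)).mul
        ((((hd_exp_lin 2 w).const_mul lam).mul (hR w).hasDerivAt).sub
          ((hS w).hasDerivAt.const_mul mu)))).deriv
  have hdER : deriv (ER ell lam mu P Q R S) w = _ :=
    ((hd_comp_neg R hR w).add
      ((hd_exp_lin (2 * (1 - ell)) w).mul
        ((((hd_exp_lin 2 w).const_mul mu).mul (hP w).hasDerivAt).add
          (hQ w).hasDerivAt))).deriv
  have hdES : deriv (ES ell lam mu P Q R S) w = _ :=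
    ((hd_comp_neg S hS w).add
      ((hd_exp_lin (-(2 * ell)) w).mul
        ((((hd_exp_lin 2 w).const_mul lam).mul (hP w).hasDerivAt).sub
          ((hQ w).hasDerivAt.const_mul mu)))).deriv
  refine ⟨?_, ?_, ?_, ?_⟩
  · rw [hdEP, hdPf (-w), hdRf w, hdSf w]
    simp only [EP, EQ, ER, ES, Pi.add_apply, Pi.mul_apply, Pi.sub_apply]
    simp only [e1, e2, e3, e4, e5]
    field_simp
    ring
  · rw [hdEQ, hsys2 (-w), hdRf w, hdSf w]
    simp only [EP, EQ, ER, ES, Pi.add_apply, Pi.mul_apply, Pi.sub_apply]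
    simp only [e1, e2, e3, e4, e5]
    field_simp
    ring
  · rw [hdER, hdRf (-w), hdPf w, hsys2 w]
    simp only [EP, EQ, ER, ES, Pi.add_apply, Pi.mul_apply, Pi.sub_apply]
    simp only [e1, e2, e3, e4, e5]
    field_simp
    ring
  · rw [hdES, hdSf (-w), hdPf w, hsys2 w]
    simp only [EP, EQ, ER, ES, Pi.add_apply, Pi.mul_apply, Pi.sub_apply]
    simp only [e1, e2, e3, e4, e5]
    field_simp
    ring
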